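/- With the 3-SAT construction of π_1, π_2 as described, the following are equivalent: (1) there exist natural numbers z_1, z_2 such that π_1^{z_1} π_2^{z_2} is fixpoint-free; (2) there exists a truth assignment σ : {x_1,…,x_n} → {0,1} under which every clause C_j contains a literal evaluating to 1. -/

import Mathlib

/-! 3-SAT construction.  Variables are `x_1, …, x_n`, indexed by `Fin n`; the `j`-th clause is
`C_j = {x̃_{idx j 0}, x̃_{idx j 1}, x̃_{idx j 2}}` with `idx j` strictly monotone, where the
literal on variable `idx j a` is negated iff `neg j a = true`.  The first `2n` primes are
`p_1, …, p_n, p̄_1, …, p̄_n` with `p_i = P (i-1)` and `p̄_i = P (n+i-1)` for the enumeration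
`P` of the primes (`P 0 = 2`).  Every `Sym(ℓ)`-component is realized on `Fin ℓ`, and the
`ℓ`-cycle `([ℓ]) = (1,2,…,ℓ)` is realized as `finRotate ℓ`.  Fixpoint-freeness is checked on
the disjoint union of all components. -/

namespace SatConstruction

/-- `P i` is the `(i+1)`-st prime: `P 0 = 2`, `P 1 = 3`, ….  The prime `p_i` associated with
the positive literal `x_i` is `P (i-1)` and the prime `p̄_i` associated with the negative
literal `x̄_i` is `P (n+i-1)` (with `i ∈ [n]` one-indexed). -/
noncomputable def P (i : ℕ) : ℕ := Nat.nth Nat.Prime i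

/-- `p̃` of a literal: the prime of the underlying variable, according to the sign. -/
noncomputable def ptil (n : ℕ) {m : ℕ} (idx : Fin m → Fin 3 → Fin n)
    (neg : Fin m → Fin 3 → Bool) (j : Fin m) (a : Fin 3) : ℕ :=
  if neg j a then P (n + (idx j a).val) else P (idx j a).val

/-- `r_j = p̃_{i_1} p̃_{i_2} p̃_{i_3}` for the clause `C_j`. -/
noncomputable def r (n : ℕ) {m : ℕ} (idx : Fin m → Fin 3 → Fin n)
    (neg : Fin m → Fin 3 → Bool) (j : Fin m) : ℕ :=
  ptil n idx neg j 0 * ptil n idx neg j 1 * ptil n idx neg j 2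

/-- The underlying set of the group
`G = ∏_{i=1}^n (Sym(p_i) × Sym(p̄_i) × Sym(p_i p̄_i)^{(p_i-1)(p̄_i-1)+1}) × ∏_{j=1}^m Sym(r_j)`
(embedded in a symmetric group).  The `(p_i-1)(p̄_i-1)+1` copies of `Sym(p_i p̄_i)` are
indexed by `Option (Fin (p_i - 1) × Fin (p̄_i - 1))`: `none` is the component of `α_{i,3}`
and `some (l-1, k-1)` is the component of `α_{i,l,k}`. -/
abbrev Omega (n : ℕ) {m : ℕ} (idx : Fin m → Fin 3 → Fin n)
    (neg : Fin m → Fin 3 → Bool) : Type :=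
  (Σ i : Fin n,
      (Fin (P i.val) ⊕ Fin (P (n + i.val))) ⊕
        (Σ _c : Option (Fin (P i.val - 1) × Fin (P (n + i.val) - 1)),
          Fin (P i.val * P (n + i.val)))) ⊕
    (Σ j : Fin m, Fin (r n idx neg j))

/-- `π_1 = (α_1,…,α_n,β_1,…,β_m)` with
`α_i = (α_{i,1}, α_{i,2}, α_{i,3}, α_{i,1,1}, …, α_{i,p_i-1,p̄_i-1})`,
`α_{i,1} = ([p_i])`, `α_{i,2} = ([p̄_i])`, `α_{i,3} = id`,
`α_{i,l,k} = ([p_i p̄_i])^{s_{i,l,k}}` and `β_j = id`. -/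
noncomputable def pi1 (n : ℕ) {m : ℕ} (idx : Fin m → Fin 3 → Fin n)
    (neg : Fin m → Fin 3 → Bool) (s : Fin n → ℕ → ℕ → ℕ) :
    Equiv.Perm (Omega n idx neg) :=
  Equiv.sumCongr
    (Equiv.sigmaCongrRight fun i =>
      Equiv.sumCongr
        (Equiv.sumCongr (finRotate _) (finRotate _))
        (Equiv.sigmaCongrRight fun c =>
          match c with
          | none => Equiv.refl _
          | some (l, k) =>
              finRotate (P i.val * P (n + i.val)) ^ s i (l.val + 1) (k.val + 1)))
    (Equiv.refl _)

/-- `π_2 = (γ_1,…,γ_n,δ_1,…,δ_m)` with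
`γ_i = (γ_{i,1}, γ_{i,2}, γ_{i,3}, γ_{i,1,1}, …, γ_{i,p_i-1,p̄_i-1})`,
`γ_{i,1} = γ_{i,2} = id`, `γ_{i,3} = γ_{i,l,k} = ([p_i p̄_i])` and `δ_j = ([r_j])`. -/
noncomputable def pi2 (n : ℕ) {m : ℕ} (idx : Fin m → Fin 3 → Fin n)
    (neg : Fin m → Fin 3 → Bool) :
    Equiv.Perm (Omega n idx neg) :=
  Equiv.sumCongr
    (Equiv.sigmaCongrRight fun _i =>
      Equiv.sumCongr (Equiv.refl _) (Equiv.sigmaCongrRight fun _c => finRotate _))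
    (Equiv.sigmaCongrRight fun j => finRotate (r n idx neg j))



private lemma refl_pow {α : Type*} (k : ℕ) : (Equiv.refl α : Equiv.Perm α) ^ k = Equiv.refl α := by
  rw [← Equiv.Perm.one_def, one_pow]

private lemma sumCongr_pow {α β : Type*} (e : Equiv.Perm α) (f : Equiv.Perm β) (k : ℕ) :
    Equiv.sumCongr e f ^ k = Equiv.sumCongr (e ^ k) (f ^ k) := by
  induction k with
  | zero => ext x; cases x <;> rfl
  | succ k ih =>
    rw [pow_succ, pow_succ, pow_succ, ih]
    ext x; cases x <;> simp [Equiv.Perm.mul_apply]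

private lemma sigmaCongrRight_pow {α : Type*} {β : α → Type*} (F : ∀ a, Equiv.Perm (β a))
    (k : ℕ) : Equiv.sigmaCongrRight F ^ k = Equiv.sigmaCongrRight (fun a => F a ^ k) := by
  induction k with
  | zero => ext ⟨i, x⟩ <;> rfl
  | succ k ih =>
    simp only [pow_succ, ih]
    ext ⟨i, x⟩ <;> simp [Equiv.Perm.mul_apply] <;> rfl

open Fin.NatCast in
private lemma finRotate_pow_apply {N : ℕ} (t : ℕ) (x : Fin (N + 1)) :
    ((finRotate (N + 1)) ^ t) x = x + (t : Fin (N + 1)) := by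
  induction t with
  | zero => simp
  | succ t ih =>
    rw [pow_succ', Equiv.Perm.mul_apply, ih, finRotate_succ_apply]
    push_cast
    abel

open Fin.NatCast in
private lemma finRotate_pow_fix {N : ℕ} (hN : 0 < N) (t : ℕ) (x : Fin N) :
    ((finRotate N) ^ t) x = x ↔ N ∣ t := by
  match N, hN with
  | (N + 1), _ =>
    rw [finRotate_pow_apply, add_eq_left, Fin.natCast_eq_zero]


section
variable (n : ℕ) {m : ℕ} (idx : Fin m → Fin 3 → Fin n) (neg : Fin m → Fin 3 → Bool)
  (s : Fin n → ℕ → ℕ → ℕ) (z1 z2 : ℕ)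

private lemma app1 (i : Fin n) (x : Fin (P i.val)) :
    (pi1 n idx neg s ^ z1 * pi2 n idx neg ^ z2)
        (Sum.inl ⟨i, Sum.inl (Sum.inl x)⟩ : Omega n idx neg) =
      Sum.inl ⟨i, Sum.inl (Sum.inl ((finRotate _ ^ z1) x))⟩ := by
  simp [pi1, pi2, sumCongr_pow, sigmaCongrRight_pow, refl_pow, Equiv.Perm.mul_apply]

private lemma app2 (i : Fin n) (x : Fin (P (n + i.val))) :
    (pi1 n idx neg s ^ z1 * pi2 n idx neg ^ z2)
        (Sum.inl ⟨i, Sum.inl (Sum.inr x)⟩ : Omega n idx neg) =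
      Sum.inl ⟨i, Sum.inl (Sum.inr ((finRotate _ ^ z1) x))⟩ := by
  simp [pi1, pi2, sumCongr_pow, sigmaCongrRight_pow, refl_pow, Equiv.Perm.mul_apply]

private lemma app3 (i : Fin n) (x : Fin (P i.val * P (n + i.val))) :
    (pi1 n idx neg s ^ z1 * pi2 n idx neg ^ z2)
        (Sum.inl ⟨i, Sum.inr ⟨none, x⟩⟩ : Omega n idx neg) =
      Sum.inl ⟨i, Sum.inr ⟨none, (finRotate _ ^ z2) x⟩⟩ := by
  simp [pi1, pi2, sumCongr_pow, sigmaCongrRight_pow, refl_pow, Equiv.Perm.mul_apply]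

private lemma app4 (i : Fin n) (l : Fin (P i.val - 1)) (k : Fin (P (n + i.val) - 1))
    (x : Fin (P i.val * P (n + i.val))) :
    (pi1 n idx neg s ^ z1 * pi2 n idx neg ^ z2)
        (Sum.inl ⟨i, Sum.inr ⟨some (l, k), x⟩⟩ : Omega n idx neg) =
      Sum.inl ⟨i, Sum.inr ⟨some (l, k),
        (finRotate _ ^ (s i (l.val + 1) (k.val + 1) * z1 + z2)) x⟩⟩ := by
  simp only [pi1, pi2, sumCongr_pow, sigmaCongrRight_pow, refl_pow, Equiv.Perm.mul_apply,
    Equiv.sumCongr_apply, Sum.map_inl, Sum.map_inr, Equiv.refl_apply,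
    Equiv.sigmaCongrRight_apply]
  rw [← pow_mul, ← Equiv.Perm.mul_apply, ← pow_add]

private lemma app5 (j : Fin m) (x : Fin (r n idx neg j)) :
    (pi1 n idx neg s ^ z1 * pi2 n idx neg ^ z2)
        (Sum.inr ⟨j, x⟩ : Omega n idx neg) =
      Sum.inr ⟨j, (finRotate _ ^ z2) x⟩ := by
  simp [pi1, pi2, sumCongr_pow, sigmaCongrRight_pow, refl_pow, Equiv.Perm.mul_apply]

private lemma prP (t : ℕ) : (P t).Prime := Nat.prime_nth_prime t

private lemma Pinj : Function.Injective P :=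
  Nat.nth_injective Nat.infinite_setOf_prime

private lemma r_pos (j : Fin m) : 0 < r n idx neg j := by
  have h : ∀ a, 0 < ptil n idx neg j a := by
    intro a; unfold ptil; split <;> exact (prP _).pos
  exact Nat.mul_pos (Nat.mul_pos (h 0) (h 1)) (h 2)

private lemma fixfree_iff :
    (∀ a : Omega n idx neg, (pi1 n idx neg s ^ z1 * pi2 n idx neg ^ z2) a ≠ a) ↔
      ((∀ i : Fin n, ¬ P i.val ∣ z1 ∧ ¬ P (n + i.val) ∣ z1 ∧
          ¬ P i.val * P (n + i.val) ∣ z2 ∧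
          ∀ l : Fin (P i.val - 1), ∀ k : Fin (P (n + i.val) - 1),
            ¬ P i.val * P (n + i.val) ∣ (s i (l.val + 1) (k.val + 1) * z1 + z2)) ∧
        ∀ j : Fin m, ¬ r n idx neg j ∣ z2) := by
  have pq_pos : ∀ i : Fin n, 0 < P i.val * P (n + i.val) := fun i =>
    Nat.mul_pos (prP _).pos (prP _).pos
  constructor
  · intro h
    refine ⟨fun i => ⟨?_, ?_, ?_, fun l k => ?_⟩, fun j => ?_⟩
    · intro hdvd
      exact h (Sum.inl ⟨i, Sum.inl (Sum.inl ⟨0, (prP _).pos⟩)⟩)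
        (by rw [app1, (finRotate_pow_fix (prP _).pos z1 _).mpr hdvd])
    · intro hdvd
      exact h (Sum.inl ⟨i, Sum.inl (Sum.inr ⟨0, (prP _).pos⟩)⟩)
        (by rw [app2, (finRotate_pow_fix (prP _).pos z1 _).mpr hdvd])
    · intro hdvd
      exact h (Sum.inl ⟨i, Sum.inr ⟨none, ⟨0, pq_pos i⟩⟩⟩)
        (by rw [app3, (finRotate_pow_fix (pq_pos i) z2 _).mpr hdvd])
    · intro hdvd
      exact h (Sum.inl ⟨i, Sum.inr ⟨some (l, k), ⟨0, pq_pos i⟩⟩⟩)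
        (by rw [app4, (finRotate_pow_fix (pq_pos i) _ _).mpr hdvd])
    · intro hdvd
      exact h (Sum.inr ⟨j, ⟨0, r_pos n idx neg j⟩⟩)
        (by rw [app5, (finRotate_pow_fix (r_pos n idx neg j) z2 _).mpr hdvd])
  · rintro ⟨h1, h2⟩ (⟨i, (x | x) | ⟨(_ | ⟨l, k⟩), x⟩⟩ | ⟨j, x⟩) heq
    · rw [app1] at heq
      simp only [Sum.inl.injEq, Sum.inr.injEq, Sigma.mk.inj_iff, heq_eq_eq, true_and] at heq
      exact (h1 i).1 ((finRotate_pow_fix (prP _).pos z1 x).mp heq)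
    · rw [app2] at heq
      simp only [Sum.inl.injEq, Sum.inr.injEq, Sigma.mk.inj_iff, heq_eq_eq, true_and] at heq
      exact (h1 i).2.1 ((finRotate_pow_fix (prP _).pos z1 x).mp heq)
    · rw [app3] at heq
      simp only [Sum.inl.injEq, Sum.inr.injEq, Sigma.mk.inj_iff, heq_eq_eq, true_and] at heq
      exact (h1 i).2.2.1 ((finRotate_pow_fix (pq_pos i) z2 x).mp heq)
    · rw [app4] at heq
      simp only [Sum.inl.injEq, Sum.inr.injEq, Sigma.mk.inj_iff, heq_eq_eq, true_and] at heq
      exact (h1 i).2.2.2 l k ((finRotate_pow_fix (pq_pos i) _ x).mp heq)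
    · rw [app5] at heq
      simp only [Sum.inr.injEq, Sigma.mk.inj_iff, heq_eq_eq, true_and] at heq
      exact h2 j ((finRotate_pow_fix (r_pos n idx neg j) z2 x).mp heq)

end


private lemma exists_sol {p z1 z2 : ℕ} (hp : p.Prime) (h1 : ¬ p ∣ z1) (h2 : ¬ p ∣ z2) :
    ∃ l : ℕ, 1 ≤ l ∧ l < p ∧ p ∣ z1 * l + z2 := by
  haveI : Fact p.Prime := ⟨hp⟩
  have hz1 : (z1 : ZMod p) ≠ 0 := fun h => h1 ((ZMod.natCast_eq_zero_iff _ _).mp h)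
  have hz2 : (z2 : ZMod p) ≠ 0 := fun h => h2 ((ZMod.natCast_eq_zero_iff _ _).mp h)
  set u : ZMod p := -(z2 : ZMod p) * (z1 : ZMod p)⁻¹ with hu
  have hu0 : u ≠ 0 := by
    simp only [hu, mul_ne_zero_iff, neg_ne_zero, ne_eq, inv_eq_zero]
    exact ⟨hz2, hz1⟩
  have hval : ((u.val : ℕ) : ZMod p) = u := ZMod.natCast_rightInverse u
  refine ⟨u.val, ?_, ZMod.val_lt u, ?_⟩
  · have := (ZMod.val_eq_zero u).not.mpr hu0
    omega
  · rw [← ZMod.natCast_eq_zero_iff]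
    push_cast
    rw [hval, hu]
    field_simp
    ring

/-- There are `z_1, z_2` such that `π_1^{z_1} π_2^{z_2}` is fixpoint-free if and only if
there is a truth assignment `σ` under which every clause contains a literal evaluating
to `1` (`true`). -/
theorem fixpointFree_iff_satisfiable
    (n m : ℕ) (idx : Fin m → Fin 3 → Fin n) (hidx : ∀ j, StrictMono (idx j))
    (neg : Fin m → Fin 3 → Bool)
    (s : Fin n → ℕ → ℕ → ℕ)
    -- `s_{i,l,k}` is the unique number in `[0, p_i p̄_i - 1]` with `s_{i,l,k} ≡ l (mod p_i)`
    -- and `s_{i,l,k} ≡ k (mod p̄_i)`, for `l ∈ [p_i - 1]` and `k ∈ [p̄_i - 1]`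
    (hs : ∀ i : Fin n, ∀ l k : ℕ, 1 ≤ l → l < P i.val → 1 ≤ k → k < P (n + i.val) →
      s i l k < P i.val * P (n + i.val) ∧
        s i l k % P i.val = l ∧ s i l k % P (n + i.val) = k)
    :
    (∃ z1 z2 : ℕ, ∀ a : Omega n idx neg,
        (pi1 n idx neg s ^ z1 * pi2 n idx neg ^ z2) a ≠ a) ↔
      ∃ σ : Fin n → Bool, ∀ j : Fin m, ∃ a : Fin 3,
        (if neg j a then !σ (idx j a) else σ (idx j a)) = true := by
  classical
  have pq_ne : ∀ i : Fin n, P i.val ≠ P (n + i.val) := by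
    intro i h
    have := Pinj h
    omega
  have pq_cop : ∀ i : Fin n, Nat.Coprime (P i.val) (P (n + i.val)) := fun i =>
    (Nat.coprime_primes (prP _) (prP _)).mpr (pq_ne i)
  constructor
  · rintro ⟨z1, z2, h⟩
    rw [fixfree_iff] at h
    obtain ⟨hvar, hcl⟩ := h
    have key : ∀ i : Fin n, P i.val ∣ z2 ∨ P (n + i.val) ∣ z2 := by
      intro i
      by_contra hc
      push_neg at hc
      obtain ⟨hc1, hc2⟩ := hc
      obtain ⟨hz1p, hz1q, -, hD⟩ := hvar i
      obtain ⟨l, hl1, hl2, hl3⟩ := exists_sol (prP i.val) hz1p hc1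
      obtain ⟨k, hk1, hk2, hk3⟩ := exists_sol (prP (n + i.val)) hz1q hc2
      obtain ⟨-, hsl, hsk⟩ := hs i l k hl1 hl2 hk1 hk2
      have hmodp : s i l k ≡ l [MOD P i.val] := by
        unfold Nat.ModEq
        rw [hsl, Nat.mod_eq_of_lt hl2]
      have hmodq : s i l k ≡ k [MOD P (n + i.val)] := by
        unfold Nat.ModEq
        rw [hsk, Nat.mod_eq_of_lt hk2]
      have hdp : P i.val ∣ s i l k * z1 + z2 := by
        have h1 : s i l k * z1 + z2 ≡ l * z1 + z2 [MOD P i.val] :=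
          (hmodp.mul_right z1).add_right z2
        have h2 : l * z1 + z2 ≡ 0 [MOD P i.val] :=
          Nat.modEq_zero_iff_dvd.mpr (by rwa [mul_comm] at hl3)
        exact Nat.modEq_zero_iff_dvd.mp (h1.trans h2)
      have hdq : P (n + i.val) ∣ s i l k * z1 + z2 := by
        have h1 : s i l k * z1 + z2 ≡ k * z1 + z2 [MOD P (n + i.val)] :=
          (hmodq.mul_right z1).add_right z2
        have h2 : k * z1 + z2 ≡ 0 [MOD P (n + i.val)] :=
          Nat.modEq_zero_iff_dvd.mpr (by rwa [mul_comm] at hk3)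
        exact Nat.modEq_zero_iff_dvd.mp (h1.trans h2)
      apply hD ⟨l - 1, by omega⟩ ⟨k - 1, by omega⟩
      show P i.val * P (n + i.val) ∣ s i (l - 1 + 1) (k - 1 + 1) * z1 + z2
      rw [Nat.sub_add_cancel hl1, Nat.sub_add_cancel hk1]
      exact (pq_cop i).mul_dvd_of_dvd_of_dvd hdp hdq
    refine ⟨fun i => decide (P (n + i.val) ∣ z2), fun j => ?_⟩
    have ptil_prime : ∀ a : Fin 3, (ptil n idx neg j a).Prime := by
      intro a; unfold ptil; split <;> exact prP _
    have hdist : ∀ a b : Fin 3, a ≠ b → ptil n idx neg j a ≠ ptil n idx neg j b := by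
      intro a b hab
      have hv : idx j a ≠ idx j b := (hidx j).injective.ne hab
      have hv' : (idx j a).val ≠ (idx j b).val := fun hh => hv (Fin.ext hh)
      have h1 : (idx j a).val < n := (idx j a).isLt
      have h2 : (idx j b).val < n := (idx j b).isLt
      unfold ptil
      split <;> split <;> intro hh <;> (have := Pinj hh; omega)
    have hex : ∃ a : Fin 3, ¬ ptil n idx neg j a ∣ z2 := by
      by_contra hcon
      push_neg at hcon
      apply hcl j
      have cop : ∀ a b : Fin 3, a ≠ b →
          Nat.Coprime (ptil n idx neg j a) (ptil n idx neg j b) := fun a b hab =>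
        (Nat.coprime_primes (ptil_prime a) (ptil_prime b)).mpr (hdist a b hab)
      have h01 : ptil n idx neg j 0 * ptil n idx neg j 1 ∣ z2 :=
        (cop 0 1 (by decide)).mul_dvd_of_dvd_of_dvd (hcon 0) (hcon 1)
      exact ((cop 0 2 (by decide)).mul (cop 1 2 (by decide))).mul_dvd_of_dvd_of_dvd
        h01 (hcon 2)
    obtain ⟨a, ha⟩ := hex
    refine ⟨a, ?_⟩
    rcases hna : neg j a with _ | _
    · have hp : ¬ P (idx j a).val ∣ z2 := by
        unfold ptil at ha; rwa [if_neg (by simp [hna])] at ha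
      have hq : P (n + (idx j a).val) ∣ z2 := (key (idx j a)).resolve_left hp
      simp [hq]
    · have hq : ¬ P (n + (idx j a).val) ∣ z2 := by
        unfold ptil at ha; rwa [if_pos hna] at ha
      simp [hq]
  · rintro ⟨σ, hσ⟩
    refine ⟨1, ∏ i : Fin n, P (if σ i then n + i.val else i.val), ?_⟩
    set z2 := ∏ i : Fin n, P (if σ i then n + i.val else i.val) with hz2
    have hfac : ∀ i : Fin n, P (if σ i then n + i.val else i.val) ∣ z2 := fun i =>
      Finset.dvd_prod_of_mem _ (Finset.mem_univ i)
    have hndvd : ∀ t : ℕ, (∀ i : Fin n, t ≠ (if σ i then n + i.val else i.val)) →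
        ¬ P t ∣ z2 := by
      intro t ht hdvd
      rw [hz2, Prime.dvd_finset_prod_iff (prP t).prime] at hdvd
      obtain ⟨i, -, hi⟩ := hdvd
      exact ht i (Pinj ((Nat.prime_dvd_prime_iff_eq (prP t) (prP _)).mp hi))
    have hp_ndvd : ∀ i : Fin n, σ i = true → ¬ P i.val ∣ z2 := by
      intro i hσi
      have hin : (i : ℕ) < n := i.isLt
      apply hndvd
      intro i'
      have hin' : (i' : ℕ) < n := i'.isLt
      rcases eq_or_ne i' i with rfl | hne
      · rw [if_pos hσi]
        omega
      · split
        · omega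
        · exact fun hh => hne (Fin.ext hh.symm)
    have hq_ndvd : ∀ i : Fin n, σ i = false → ¬ P (n + i.val) ∣ z2 := by
      intro i hσi
      have hin : (i : ℕ) < n := i.isLt
      apply hndvd
      intro i'
      have hin' : (i' : ℕ) < n := i'.isLt
      rcases eq_or_ne i' i with rfl | hne
      · rw [if_neg (by simp [hσi])]
        omega
      · split
        · exact fun hh => hne (Fin.ext (by omega))
        · omega
    rw [fixfree_iff]
    refine ⟨fun i => ⟨(prP _).prime.not_dvd_one, (prP _).prime.not_dvd_one, ?_, ?_⟩,
      fun j => ?_⟩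
    · intro hdvd
      rcases hσi : σ i with _ | _
      · exact hq_ndvd i hσi ((dvd_mul_left _ _).trans hdvd)
      · exact hp_ndvd i hσi ((dvd_mul_right _ _).trans hdvd)
    · intro l k hdvd
      have hl2 : l.val + 1 < P i.val := by have := l.isLt; omega
      have hk2 : k.val + 1 < P (n + i.val) := by have := k.isLt; omega
      obtain ⟨-, hsl, hsk⟩ := hs i (l.val + 1) (k.val + 1) (by omega) hl2 (by omega) hk2
      rw [mul_one] at hdvd
      rcases hσi : σ i with _ | _
      · have hpz : P i.val ∣ z2 := by
          have := hfac i; rwa [if_neg (by simp [hσi])] at this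
        have hps : P i.val ∣ s i (l.val + 1) (k.val + 1) :=
          (Nat.dvd_add_iff_left hpz).mpr ((dvd_mul_right _ _).trans hdvd)
        rw [Nat.dvd_iff_mod_eq_zero] at hps
        omega
      · have hqz : P (n + i.val) ∣ z2 := by
          have := hfac i; rwa [if_pos hσi] at this
        have hqs : P (n + i.val) ∣ s i (l.val + 1) (k.val + 1) :=
          (Nat.dvd_add_iff_left hqz).mpr ((dvd_mul_left _ _).trans hdvd)
        rw [Nat.dvd_iff_mod_eq_zero] at hqs
        omega
    · obtain ⟨a, ha⟩ := hσ j
      have hptil_dvd : ptil n idx neg j a ∣ r n idx neg j := by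
        unfold r
        fin_cases a
        · exact dvd_mul_of_dvd_left (dvd_mul_right _ _) _
        · exact dvd_mul_of_dvd_left (dvd_mul_left _ _) _
        · exact dvd_mul_left _ _
      intro hdvd
      have h2 := hptil_dvd.trans hdvd
      rcases hna : neg j a with _ | _
      · rw [hna] at ha
        simp at ha
        have := hp_ndvd (idx j a) ha
        apply this
        unfold ptil at h2
        rwa [if_neg (by simp [hna])] at h2
      · rw [hna] at ha
        simp at ha
        have := hq_ndvd (idx j a) ha
        apply this
        unfold ptil at h2
        rwa [if_pos hna] at h2


end SatConstruction
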